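/- Let n be a natural number and N = 2n + 1. Let A be the unital associative ℝ-algebra presented by generators x_0, …, x_{N−1} subject to the relations: x_i² = 1 for all i < 2n and x_{N−1}² = −1; x_{2k}·x_{2k+1} = −x_{2k+1}·x_{2k} for every 0 ≤ k < n; x_{N−1} commutes with every generator; and x_i·x_j = x_j·x_i for every other pair i ≠ j among the first 2n generators (i.e., whenever {i,j} ⊆ {0,…,2n−1} is not of the form {2k, 2k+1}). Then A is isomorphic, as an ℝ-algebra, to the complex matrix algebra M_{2^n}(ℂ) regarded as an ℝ-algebra. (This algebra A is the twisted group algebra 𝒜_ℝ(μ_2^{2n+1}) attached to the quadratic form q_2^{2n+1}(x) = x_1x_2 + ⋯ + x_{2n−1}x_{2n} + x_{2n+1} over the field of two elements.) -/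

import Mathlib

/-- The relations presenting the twisted group algebra `𝒜_ℝ(μ₂^{2n+1})`:
generators `x_i` (`i : Fin (2n+1)`) with `x_i² = 1` for `i < 2n`, `x_{2n}² = -1`,
`x_{2k} x_{2k+1} = - x_{2k+1} x_{2k}` for `k < n`, the last generator `x_{2n}`
commuting with every generator, and `x_i x_j = x_j x_i` for every other pair `i ≠ j`
among the first `2n` generators. -/
inductive Rel14 (n : ℕ) :
    FreeAlgebra ℝ (Fin (2 * n + 1)) → FreeAlgebra ℝ (Fin (2 * n + 1)) → Prop
  | sq (i : Fin (2 * n + 1)) :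
      Rel14 n (FreeAlgebra.ι ℝ i * FreeAlgebra.ι ℝ i)
        (if (i : ℕ) < 2 * n then 1 else -1)
  | anti (k : ℕ) (hk : k < n) :
      Rel14 n
        (FreeAlgebra.ι ℝ (⟨2 * k, by omega⟩ : Fin (2 * n + 1)) *
          FreeAlgebra.ι ℝ (⟨2 * k + 1, by omega⟩ : Fin (2 * n + 1)))
        (-(FreeAlgebra.ι ℝ (⟨2 * k + 1, by omega⟩ : Fin (2 * n + 1)) *
          FreeAlgebra.ι ℝ (⟨2 * k, by omega⟩ : Fin (2 * n + 1))))
  | commLast (i : Fin (2 * n + 1)) :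
      Rel14 n
        (FreeAlgebra.ι ℝ (⟨2 * n, by omega⟩ : Fin (2 * n + 1)) * FreeAlgebra.ι ℝ i)
        (FreeAlgebra.ι ℝ i * FreeAlgebra.ι ℝ (⟨2 * n, by omega⟩ : Fin (2 * n + 1)))
  | comm (i j : Fin (2 * n + 1)) (hij : i ≠ j)
      (hi : (i : ℕ) < 2 * n) (hj : (j : ℕ) < 2 * n)
      (h : ¬∃ k : ℕ, ((i : ℕ) = 2 * k ∧ (j : ℕ) = 2 * k + 1) ∨
        ((i : ℕ) = 2 * k + 1 ∧ (j : ℕ) = 2 * k)) :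
      Rel14 n (FreeAlgebra.ι ℝ i * FreeAlgebra.ι ℝ j) (FreeAlgebra.ι ℝ j * FreeAlgebra.ι ℝ i)

namespace T14proof

abbrev A (n : ℕ) := RingQuot (Rel14 n)

noncomputable def X (n : ℕ) (i : Fin (2 * n + 1)) : A n :=
  RingQuot.mkAlgHom ℝ (Rel14 n) (FreeAlgebra.ι ℝ i)

lemma X_sq_one {n : ℕ} (i : Fin (2 * n + 1)) (h : (i : ℕ) < 2 * n) :
    X n i * X n i = 1 := by
  have := RingQuot.mkAlgHom_rel ℝ (Rel14.sq (n := n) i)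
  rw [if_pos h, map_mul, map_one] at this
  exact this

lemma X_sq_neg {n : ℕ} (i : Fin (2 * n + 1)) (h : ¬ (i : ℕ) < 2 * n) :
    X n i * X n i = -1 := by
  have := RingQuot.mkAlgHom_rel ℝ (Rel14.sq (n := n) i)
  rw [if_neg h, map_mul, map_neg, map_one] at this
  exact this

lemma X_anti {n : ℕ} (k : ℕ) (hk : k < n) :
    X n ⟨2 * k, by omega⟩ * X n ⟨2 * k + 1, by omega⟩ =
      -(X n ⟨2 * k + 1, by omega⟩ * X n ⟨2 * k, by omega⟩) := by
  have := RingQuot.mkAlgHom_rel ℝ (Rel14.anti (n := n) k hk)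
  rw [map_mul, map_neg, map_mul] at this
  exact this

lemma X_commLast {n : ℕ} (i : Fin (2 * n + 1)) :
    X n ⟨2 * n, by omega⟩ * X n i = X n i * X n ⟨2 * n, by omega⟩ := by
  have := RingQuot.mkAlgHom_rel ℝ (Rel14.commLast (n := n) i)
  rw [map_mul, map_mul] at this
  exact this

lemma X_comm {n : ℕ} (i j : Fin (2 * n + 1)) (hij : i ≠ j)
    (hi : (i : ℕ) < 2 * n) (hj : (j : ℕ) < 2 * n)
    (h : ¬∃ k : ℕ, ((i : ℕ) = 2 * k ∧ (j : ℕ) = 2 * k + 1) ∨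
        ((i : ℕ) = 2 * k + 1 ∧ (j : ℕ) = 2 * k)) :
    X n i * X n j = X n j * X n i := by
  have := RingQuot.mkAlgHom_rel ℝ (Rel14.comm (n := n) i j hij hi hj h)
  rw [map_mul, map_mul] at this
  exact this

lemma algHom_ext {n : ℕ} {B : Type} [Semiring B] [Algebra ℝ B]
    (f g : A n →ₐ[ℝ] B) (h : ∀ i, f (X n i) = g (X n i)) : f = g := by
  apply RingQuot.ringQuot_ext'
  apply FreeAlgebra.hom_ext
  funext i
  simpa [X] using h i

noncomputable def mkHom {n : ℕ} {B : Type} [Ring B] [Algebra ℝ B] (F : Fin (2 * n + 1) → B)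
    (h1 : ∀ i : Fin (2 * n + 1), (i : ℕ) < 2 * n → F i * F i = 1)
    (h2 : F ⟨2 * n, by omega⟩ * F ⟨2 * n, by omega⟩ = -1)
    (h3 : ∀ (k : ℕ) (hk : k < n), F ⟨2 * k, by omega⟩ * F ⟨2 * k + 1, by omega⟩ =
      -(F ⟨2 * k + 1, by omega⟩ * F ⟨2 * k, by omega⟩))
    (h4 : ∀ i, F ⟨2 * n, by omega⟩ * F i = F i * F ⟨2 * n, by omega⟩)
    (h5 : ∀ i j : Fin (2 * n + 1), i ≠ j → (i : ℕ) < 2 * n → (j : ℕ) < 2 * n →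
      (¬∃ k : ℕ, ((i : ℕ) = 2 * k ∧ (j : ℕ) = 2 * k + 1) ∨
        ((i : ℕ) = 2 * k + 1 ∧ (j : ℕ) = 2 * k)) →
      F i * F j = F j * F i) : A n →ₐ[ℝ] B :=
  RingQuot.liftAlgHom ℝ ⟨FreeAlgebra.lift ℝ F, by
    rintro x y h
    cases h with
    | sq i =>
      simp only [map_mul, FreeAlgebra.lift_ι_apply]
      split_ifs with h
      · rw [h1 i h, map_one]
      · have hi : i = ⟨2 * n, by omega⟩ := by
          apply Fin.val_injective; simp only [Fin.val_mk]; omega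
        rw [hi, h2, map_neg, map_one]
    | anti k hk =>
      simp only [map_mul, map_neg, FreeAlgebra.lift_ι_apply]
      exact h3 k hk
    | commLast i =>
      simp only [map_mul, FreeAlgebra.lift_ι_apply]
      exact h4 i
    | comm i j hij hi hj hp =>
      simp only [map_mul, FreeAlgebra.lift_ι_apply]
      exact h5 i j hij hi hj hp⟩

lemma mkHom_X {n : ℕ} {B : Type} [Ring B] [Algebra ℝ B] (F : Fin (2 * n + 1) → B)
    (h1 : ∀ i : Fin (2 * n + 1), (i : ℕ) < 2 * n → F i * F i = 1)
    (h2 : F ⟨2 * n, by omega⟩ * F ⟨2 * n, by omega⟩ = -1)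
    (h3 : ∀ (k : ℕ) (hk : k < n), F ⟨2 * k, by omega⟩ * F ⟨2 * k + 1, by omega⟩ =
      -(F ⟨2 * k + 1, by omega⟩ * F ⟨2 * k, by omega⟩))
    (h4 : ∀ i, F ⟨2 * n, by omega⟩ * F i = F i * F ⟨2 * n, by omega⟩)
    (h5 : ∀ i j : Fin (2 * n + 1), i ≠ j → (i : ℕ) < 2 * n → (j : ℕ) < 2 * n →
      (¬∃ k : ℕ, ((i : ℕ) = 2 * k ∧ (j : ℕ) = 2 * k + 1) ∨
        ((i : ℕ) = 2 * k + 1 ∧ (j : ℕ) = 2 * k)) →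
      F i * F j = F j * F i) (i : Fin (2 * n + 1)) :
    mkHom F h1 h2 h3 h4 h5 (X n i) = F i := by
  rw [mkHom, X, RingQuot.liftAlgHom_mkAlgHom_apply, FreeAlgebra.lift_ι_apply]

section Eabs
variable {B : Type} [Ring B] [Algebra ℝ B]

noncomputable def Eab (u v : B) : Fin 2 → Fin 2 → B := fun i j =>
  if i = 0 then (if j = 0 then (2⁻¹ : ℝ) • (1 + u) else (2⁻¹ : ℝ) • (v + u * v))
  else (if j = 0 then (2⁻¹ : ℝ) • (v - u * v) else (2⁻¹ : ℝ) • (1 - u))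

lemma Eab_mul {u v : B} (hu : u * u = 1) (hv : v * v = 1) (hvu : v * u = -(u * v)) (i j k l : Fin 2) :
    Eab u v i j * Eab u v k l = if j = k then Eab u v i l else 0 := by
  have hu' : ∀ x : B, u * (u * x) = x := fun x => by rw [← mul_assoc, hu, one_mul]
  have hv' : ∀ x : B, v * (v * x) = x := fun x => by rw [← mul_assoc, hv, one_mul]
  have hvu' : ∀ x : B, v * (u * x) = -(u * (v * x)) := fun x => by
    rw [← mul_assoc, hvu, neg_mul, mul_assoc]
  fin_cases i <;> fin_cases j <;> fin_cases k <;> fin_cases l <;>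
    simp only [Eab, Fin.mk_zero, Fin.mk_one, if_true, if_false, Fin.isValue, one_ne_zero, zero_ne_one, ↓reduceIte,
      smul_mul_smul_comm] <;>
    · simp only [mul_add, add_mul, mul_sub, sub_mul, mul_one, one_mul, mul_neg, neg_mul,
        mul_assoc, hu, hv, hvu, hu', hv', hvu']
      module

lemma Eab_sum {u v : B} : Eab u v 0 0 + Eab u v 1 1 = 1 := by
  simp only [Eab, Fin.mk_zero, Fin.mk_one, if_true, one_ne_zero, ↓reduceIte, Fin.isValue]
  module

lemma Eab_diff {u v : B} : Eab u v 0 0 - Eab u v 1 1 = u := by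
  simp only [Eab, Fin.mk_zero, Fin.mk_one, if_true, one_ne_zero, ↓reduceIte, Fin.isValue]
  module

lemma Eab_off {u v : B} : Eab u v 0 1 + Eab u v 1 0 = v := by
  simp only [Eab, Fin.mk_zero, Fin.mk_one, if_true, one_ne_zero, zero_ne_one, ↓reduceIte, Fin.isValue]
  module

lemma map_Eab {C : Type} [Ring C] [Algebra ℝ C] (f : B →ₐ[ℝ] C) (u v : B) (i j : Fin 2) :
    f (Eab u v i j) = Eab (f u) (f v) i j := by
  fin_cases i <;> fin_cases j <;> simp [Eab]

end Eabs

noncomputable def oneByOne (R B : Type*) [CommSemiring R] [Semiring B] [Algebra R B] :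
    B ≃ₐ[R] Matrix (Fin 1) (Fin 1) B where
  toFun b := Matrix.of fun _ _ => b
  invFun M := M 0 0
  left_inv b := rfl
  right_inv M := by ext i j; fin_cases i; fin_cases j; rfl
  map_mul' a b := by ext i j; simp [Matrix.mul_apply]
  map_add' a b := by ext i j; simp
  commutes' r := by
    ext i j; fin_cases i; fin_cases j
    simp [Matrix.algebraMap_matrix_apply]

noncomputable def phi0 : A 0 →ₐ[ℝ] ℂ :=
  mkHom (fun _ => Complex.I)
    (fun i hi => absurd hi (by omega))
    (by simp [Complex.I_mul_I])
    (fun k hk => absurd hk (by omega))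
    (fun i => rfl)
    (fun i j _ hi => absurd hi (by omega))

noncomputable def equiv0 : A 0 ≃ₐ[ℝ] ℂ := by
  refine AlgEquiv.ofAlgHom phi0
    (Complex.liftAux (X 0 ⟨0, by omega⟩) (X_sq_neg ⟨0, by omega⟩ (by omega))) ?_ ?_
  · apply Complex.algHom_ext
    simp only [AlgHom.coe_comp, Function.comp_apply, Complex.liftAux_apply_I, AlgHom.coe_id,
      id_eq]
    rw [phi0, mkHom_X]
  · apply algHom_ext
    intro i
    have : i = ⟨0, by omega⟩ := by apply Fin.val_injective; simp only [Fin.val_mk]; omega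
    subst this
    simp only [AlgHom.coe_comp, Function.comp_apply, AlgHom.coe_id, id_eq]
    rw [phi0, mkHom_X, Complex.liftAux_apply_I]


section MatAbs
variable {B : Type} [Ring B] [Algebra ℝ B]

/-- diagonal scalar embedding as an `AlgHom` -/
noncomputable def dHom : B →ₐ[ℝ] Matrix (Fin 2) (Fin 2) B where
  toFun a := Matrix.diagonal (fun _ => a)
  map_one' := Matrix.diagonal_one
  map_mul' a b := by rw [Matrix.diagonal_mul_diagonal]
  map_zero' := Matrix.diagonal_zero
  map_add' a b := by rw [Matrix.diagonal_add]
  commutes' r := by rw [Matrix.algebraMap_eq_diagonal]; rfl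

lemma dHom_apply (a : B) : dHom a = Matrix.diagonal (fun _ => a) := rfl

noncomputable def sz : Matrix (Fin 2) (Fin 2) B := !![1, 0; 0, -1]
noncomputable def sx : Matrix (Fin 2) (Fin 2) B := !![0, 1; 1, 0]

lemma sz_sq : sz * sz = (1 : Matrix (Fin 2) (Fin 2) B) := by
  ext i j
  fin_cases i <;> fin_cases j <;>
    simp [sz, Matrix.mul_apply, Fin.sum_univ_two, Matrix.one_apply, neg_one_mul, mul_neg_one,
      neg_neg]

lemma sx_sq : sx * sx = (1 : Matrix (Fin 2) (Fin 2) B) := by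
  ext i j
  fin_cases i <;> fin_cases j <;>
    simp [sx, Matrix.mul_apply, Fin.sum_univ_two, Matrix.one_apply]

lemma sz_sx_anti : (sz : Matrix (Fin 2) (Fin 2) B) * sx = -(sx * sz) := by
  ext i j
  fin_cases i <;> fin_cases j <;>
    simp [sz, sx, Matrix.mul_apply, Fin.sum_univ_two]

lemma d_comm_sz (a : B) : dHom a * sz = sz * dHom a := by
  ext i j
  fin_cases i <;> fin_cases j <;>
    simp [sz, dHom_apply, Matrix.mul_apply, Fin.sum_univ_two, Matrix.diagonal, neg_one_mul,
      mul_neg_one]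

lemma d_comm_sx (a : B) : dHom a * sx = sx * dHom a := by
  ext i j
  fin_cases i <;> fin_cases j <;>
    simp [sx, dHom_apply, Matrix.mul_apply, Fin.sum_univ_two, Matrix.diagonal]

lemma Eab_mat (i j : Fin 2) :
    Eab (sz : Matrix (Fin 2) (Fin 2) B) sx i j = Matrix.single i j 1 := by
  fin_cases i <;> fin_cases j <;>
    · ext a b
      fin_cases a <;> fin_cases b <;>
        · simp [Eab, sz, sx, Matrix.single, Matrix.mul_apply, Fin.sum_univ_two]
          try module

lemma dHom_mul_std (a : B) (i j : Fin 2) :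
    dHom a * Matrix.single i j (1 : B) = Matrix.single i j a := by
  ext a' b'
  rw [dHom_apply, Matrix.diagonal_mul]
  simp [Matrix.single, mul_ite, mul_one, mul_zero]

end MatAbs

section Step
variable (n : ℕ)

/-- the generator images for the map `A (n+1) → M₂(A n)` -/
noncomputable def phiF (i : Fin (2 * (n + 1) + 1)) : Matrix (Fin 2) (Fin 2) (A n) :=
  if h : (i : ℕ) < 2 * n then dHom (X n ⟨i, by omega⟩)
  else if (i : ℕ) = 2 * n then sz
  else if (i : ℕ) = 2 * n + 1 then sx
  else dHom (X n ⟨2 * n, by omega⟩)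

noncomputable def phi : A (n + 1) →ₐ[ℝ] Matrix (Fin 2) (Fin 2) (A n) := by
  refine mkHom (phiF n) ?_ ?_ ?_ ?_ ?_
  · -- squares are 1 for i < 2(n+1)
    intro i hi
    rcases lt_trichotomy (i : ℕ) (2 * n) with h | h | h
    · rw [phiF, dif_pos h, ← map_mul, X_sq_one _ (by simpa using h), map_one]
    · rw [phiF, dif_neg (by omega), if_pos h]; exact sz_sq
    · have h' : (i : ℕ) = 2 * n + 1 := by omega
      rw [phiF, dif_neg (by omega), if_neg (by omega), if_pos h']; exact sx_sq
  · -- square of the last generator is -1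
    rw [phiF]
    rw [dif_neg (by simp only [Fin.val_mk]; omega), if_neg (by simp only [Fin.val_mk]; omega),
      if_neg (by simp only [Fin.val_mk]; omega), ← map_mul,
      X_sq_neg _ (by simp only [Fin.val_mk]; omega), map_neg, map_one]
  · -- anticommutation of the pairs
    intro k hk
    rcases Nat.lt_succ_iff_lt_or_eq.mp hk with h | h
    · rw [phiF, phiF, dif_pos (by simp only [Fin.val_mk]; omega),
        dif_pos (by simp only [Fin.val_mk]; omega), ← map_mul, ← map_mul,
        X_anti k h, map_neg]
    · subst h
      rw [phiF, phiF, dif_neg (by simp only [Fin.val_mk]; omega),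
        dif_neg (by simp only [Fin.val_mk]; omega), if_pos (by simp only [Fin.val_mk]),
        if_neg (by simp only [Fin.val_mk]; omega), if_pos (by simp only [Fin.val_mk])]
      exact sz_sx_anti
  · -- the last generator commutes with everything
    intro i
    have hL : phiF n ⟨2 * (n + 1), by omega⟩ = dHom (X n ⟨2 * n, by omega⟩) := by
      rw [phiF, dif_neg (by simp only [Fin.val_mk]; omega),
        if_neg (by simp only [Fin.val_mk]; omega), if_neg (by simp only [Fin.val_mk]; omega)]
    rw [hL]
    rcases lt_trichotomy (i : ℕ) (2 * n) with h | h | h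
    · rw [phiF, dif_pos h, ← map_mul, ← map_mul, X_commLast]
    · rw [phiF, dif_neg (by omega), if_pos h]; exact d_comm_sz _
    · rcases Nat.lt_or_ge (i : ℕ) (2 * n + 2) with h' | h'
      · have h'' : (i : ℕ) = 2 * n + 1 := by omega
        rw [phiF, dif_neg (by omega), if_neg (by omega), if_pos h'']; exact d_comm_sx _
      · rw [phiF, dif_neg (by omega), if_neg (by omega), if_neg (by omega)]
  · -- commutation of non-paired generators
    intro i j hij hi hj hp
    have hvij : (i : ℕ) ≠ (j : ℕ) := fun h => hij (Fin.val_injective h)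
    rcases lt_trichotomy (i : ℕ) (2 * n) with h1 | h1 | h1 <;>
      rcases lt_trichotomy (j : ℕ) (2 * n) with h2 | h2 | h2
    · -- both < 2n
      rw [phiF, phiF, dif_pos h1, dif_pos h2, ← map_mul, ← map_mul]
      rw [X_comm ⟨i, by omega⟩ ⟨j, by omega⟩
        (fun h => hvij (by simpa using congrArg Fin.val h)) (by simpa using h1)
        (by simpa using h2)
        (by rintro ⟨k, hk⟩; exact hp ⟨k, by simpa using hk⟩)]
    · rw [phiF, phiF, dif_pos h1, dif_neg (by omega), if_pos h2]; exact d_comm_sz _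
    · have h2' : (j : ℕ) = 2 * n + 1 := by omega
      rw [phiF, phiF, dif_pos h1, dif_neg (by omega), if_neg (by omega), if_pos h2']
      exact d_comm_sx _
    · rw [phiF, phiF, dif_pos h2, dif_neg (by omega), if_pos h1]
      exact (d_comm_sz _).symm
    · omega
    · exact absurd (⟨n, Or.inl ⟨h1, by omega⟩⟩ : ∃ k : ℕ,
        ((i : ℕ) = 2 * k ∧ (j : ℕ) = 2 * k + 1) ∨
          ((i : ℕ) = 2 * k + 1 ∧ (j : ℕ) = 2 * k)) hp
    · have h1' : (i : ℕ) = 2 * n + 1 := by omega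
      rw [phiF, phiF, dif_pos h2, dif_neg (by omega), if_neg (by omega), if_pos h1']
      exact (d_comm_sx _).symm
    · exact absurd (⟨n, Or.inr ⟨by omega, h2⟩⟩ : ∃ k : ℕ,
        ((i : ℕ) = 2 * k ∧ (j : ℕ) = 2 * k + 1) ∨
          ((i : ℕ) = 2 * k + 1 ∧ (j : ℕ) = 2 * k)) hp
    · omega


noncomputable def thF (i : Fin (2 * n + 1)) : A (n + 1) :=
  if h : (i : ℕ) < 2 * n then X (n + 1) ⟨i, by omega⟩ else X (n + 1) ⟨2 * n + 2, by omega⟩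

noncomputable def theta : A n →ₐ[ℝ] A (n + 1) := by
  refine mkHom (thF n) ?_ ?_ ?_ ?_ ?_
  · intro i hi
    rw [thF, dif_pos hi]
    exact X_sq_one _ (by simp only [Fin.val_mk]; omega)
  · rw [thF, dif_neg (by simp only [Fin.val_mk]; omega)]
    exact X_sq_neg _ (by simp only [Fin.val_mk]; omega)
  · intro k hk
    rw [thF, thF, dif_pos (by simp only [Fin.val_mk]; omega),
      dif_pos (by simp only [Fin.val_mk]; omega)]
    exact X_anti k (by omega)
  · intro i
    rw [thF, dif_neg (by simp only [Fin.val_mk]; omega)]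
    by_cases h : (i : ℕ) < 2 * n
    · rw [thF, dif_pos h]
      exact X_commLast ⟨i, by omega⟩
    · rw [thF, dif_neg h]
  · intro i j hij hi hj hp
    rw [thF, thF, dif_pos hi, dif_pos hj]
    exact X_comm ⟨i, by omega⟩ ⟨j, by omega⟩
      (fun h => hij (Fin.val_injective (by simpa using congrArg Fin.val h)))
      (by simp only [Fin.val_mk]; omega) (by simp only [Fin.val_mk]; omega)
      (by rintro ⟨k, hk⟩; exact hp ⟨k, by simpa using hk⟩)

lemma theta_X (i : Fin (2 * n + 1)) : theta n (X n i) = thF n i := by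
  unfold theta; exact mkHom_X _ _ _ _ _ _ i

noncomputable def uu : A (n + 1) := X (n + 1) ⟨2 * n, by omega⟩
noncomputable def vv : A (n + 1) := X (n + 1) ⟨2 * n + 1, by omega⟩

lemma uu_sq : uu n * uu n = 1 := X_sq_one _ (by simp only [Fin.val_mk]; omega)
lemma vv_sq : vv n * vv n = 1 := X_sq_one _ (by simp only [Fin.val_mk]; omega)

lemma uv_anti : uu n * vv n = -(vv n * uu n) := X_anti n (by omega)

lemma vu_anti : vv n * uu n = -(uu n * vv n) := by
  rw [uv_anti, neg_neg]

lemma theta_comm_uu (a : A n) : theta n a * uu n = uu n * theta n a := by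
  obtain ⟨p, rfl⟩ := RingQuot.mkAlgHom_surjective ℝ (Rel14 n) a
  induction p using FreeAlgebra.induction with
  | grade0 r =>
    rw [AlgHom.commutes, AlgHom.commutes]
    exact Algebra.commutes r _
  | grade1 i =>
    show theta n (X n i) * uu n = uu n * theta n (X n i)
    rw [theta_X, thF]
    by_cases h : (i : ℕ) < 2 * n
    · rw [dif_pos h]
      exact X_comm ⟨i, by omega⟩ ⟨2 * n, by omega⟩
        (fun hh => by have := congrArg Fin.val hh; simp only [Fin.val_mk] at this; omega)
        (by simp only [Fin.val_mk]; omega) (by simp only [Fin.val_mk]; omega)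
        (by rintro ⟨k, hk⟩; simp only [Fin.val_mk] at hk; omega)
    · rw [dif_neg h]
      exact X_commLast ⟨2 * n, by omega⟩
  | mul x y hx hy =>
    rw [map_mul, map_mul, mul_assoc, hy, ← mul_assoc, hx, mul_assoc]
  | add x y hx hy =>
    rw [map_add, map_add, add_mul]
    exact (congrArg₂ (· + ·) hx hy).trans (mul_add _ _ _).symm

lemma theta_comm_vv (a : A n) : theta n a * vv n = vv n * theta n a := by
  obtain ⟨p, rfl⟩ := RingQuot.mkAlgHom_surjective ℝ (Rel14 n) a
  induction p using FreeAlgebra.induction with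
  | grade0 r =>
    rw [AlgHom.commutes, AlgHom.commutes]
    exact Algebra.commutes r _
  | grade1 i =>
    show theta n (X n i) * vv n = vv n * theta n (X n i)
    rw [theta_X, thF]
    by_cases h : (i : ℕ) < 2 * n
    · rw [dif_pos h]
      exact X_comm ⟨i, by omega⟩ ⟨2 * n + 1, by omega⟩
        (fun hh => by have := congrArg Fin.val hh; simp only [Fin.val_mk] at this; omega)
        (by simp only [Fin.val_mk]; omega) (by simp only [Fin.val_mk]; omega)
        (by rintro ⟨k, hk⟩; simp only [Fin.val_mk] at hk; omega)
    · rw [dif_neg h]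
      exact X_commLast ⟨2 * n + 1, by omega⟩
  | mul x y hx hy =>
    rw [map_mul, map_mul, mul_assoc, hy, ← mul_assoc, hx, mul_assoc]
  | add x y hx hy =>
    rw [map_add, map_add, add_mul]
    exact (congrArg₂ (· + ·) hx hy).trans (mul_add _ _ _).symm

lemma theta_comm_uv (a : A n) :
    theta n a * (uu n * vv n) = (uu n * vv n) * theta n a := by
  rw [← mul_assoc, theta_comm_uu, mul_assoc, theta_comm_vv, ← mul_assoc]

lemma theta_comm_E (a : A n) (i j : Fin 2) :
    theta n a * Eab (uu n) (vv n) i j = Eab (uu n) (vv n) i j * theta n a := by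
  fin_cases i <;> fin_cases j <;>
      simp only [Eab, Fin.mk_zero, Fin.mk_one, one_ne_zero, zero_ne_one, ↓reduceIte,
        Fin.isValue] <;>
    rw [mul_smul_comm, smul_mul_assoc]
  · congr 1; rw [mul_add, add_mul, mul_one, one_mul, theta_comm_uu]
  · congr 1; rw [mul_add, add_mul, theta_comm_vv, theta_comm_uv]
  · congr 1; rw [mul_sub, sub_mul, theta_comm_vv, theta_comm_uv]
  · congr 1; rw [mul_sub, sub_mul, mul_one, one_mul, theta_comm_uu]

noncomputable def psiFun (M : Matrix (Fin 2) (Fin 2) (A n)) : A (n + 1) :=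
  ∑ i, ∑ j, theta n (M i j) * Eab (uu n) (vv n) i j

lemma psi_key (a b : A n) (i j k l : Fin 2) :
    (theta n a * Eab (uu n) (vv n) i j) * (theta n b * Eab (uu n) (vv n) k l) =
      (theta n a * theta n b) * (if j = k then Eab (uu n) (vv n) i l else 0) := by
  calc (theta n a * Eab (uu n) (vv n) i j) * (theta n b * Eab (uu n) (vv n) k l)
      = theta n a * ((Eab (uu n) (vv n) i j * theta n b) * Eab (uu n) (vv n) k l) := by
        rw [mul_assoc, mul_assoc]
    _ = theta n a * ((theta n b * Eab (uu n) (vv n) i j) * Eab (uu n) (vv n) k l) := by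
        rw [theta_comm_E]
    _ = (theta n a * theta n b) * (Eab (uu n) (vv n) i j * Eab (uu n) (vv n) k l) := by
        rw [mul_assoc, ← mul_assoc]
    _ = (theta n a * theta n b) * (if j = k then Eab (uu n) (vv n) i l else 0) := by
        rw [Eab_mul (uu_sq n) (vv_sq n) (vu_anti n)]

noncomputable def psi : Matrix (Fin 2) (Fin 2) (A n) →ₐ[ℝ] A (n + 1) where
  toFun := psiFun n
  map_one' := by
    simp only [psiFun]
    simp only [Fin.sum_univ_two, Matrix.one_apply, one_ne_zero, zero_ne_one, ↓reduceIte,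
      map_one, map_zero, one_mul, zero_mul, add_zero, zero_add]
    exact Eab_sum
  map_mul' M N := by
    show psiFun n (M * N) = psiFun n M * psiFun n N
    simp only [psiFun]
    simp only [Matrix.mul_apply, Fin.sum_univ_two, map_add, map_mul, add_mul, mul_add]
    simp only [psi_key]
    simp only [one_ne_zero, zero_ne_one, ↓reduceIte, mul_zero, add_zero, zero_add, mul_one]
    abel
  map_zero' := by
    simp only [psiFun]
    simp only [Matrix.zero_apply, map_zero, zero_mul, Finset.sum_const_zero]
  map_add' M N := by
    show psiFun n (M + N) = psiFun n M + psiFun n N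
    simp only [psiFun]
    simp only [Matrix.add_apply, map_add, add_mul, Finset.sum_add_distrib]
  commutes' r := by
    show psiFun n (algebraMap ℝ _ r) = algebraMap ℝ _ r
    simp only [psiFun]
    simp only [Matrix.algebraMap_matrix_apply, Fin.sum_univ_two]
    simp only [one_ne_zero, zero_ne_one, ↓reduceIte, map_zero, zero_mul, add_zero, zero_add,
      AlgHom.commutes]
    rw [← mul_add, Eab_sum, mul_one]

lemma psi_apply (M : Matrix (Fin 2) (Fin 2) (A n)) : psi n M = psiFun n M := rfl


lemma phi_X (i : Fin (2 * (n + 1) + 1)) : phi n (X (n + 1) i) = phiF n i := by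
  unfold phi; exact mkHom_X _ _ _ _ _ _ i

lemma phi_u : phi n (uu n) = sz := by
  rw [uu, phi_X, phiF, dif_neg (by simp only [Fin.val_mk]; omega),
    if_pos (by simp only [Fin.val_mk])]

lemma phi_v : phi n (vv n) = sx := by
  rw [vv, phi_X, phiF, dif_neg (by simp only [Fin.val_mk]; omega),
    if_neg (by simp only [Fin.val_mk]; omega), if_pos (by simp only [Fin.val_mk])]

lemma phi_theta_comp : (phi n).comp (theta n) = dHom := by
  apply algHom_ext
  intro i
  simp only [AlgHom.coe_comp, Function.comp_apply]
  rw [theta_X, thF]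
  by_cases h : (i : ℕ) < 2 * n
  · rw [dif_pos h, phi_X, phiF, dif_pos (by simp only [Fin.val_mk]; omega)]
  · rw [dif_neg h, phi_X, phiF, dif_neg (by simp only [Fin.val_mk]; omega),
      if_neg (by simp only [Fin.val_mk]; omega), if_neg (by simp only [Fin.val_mk]; omega)]
    congr 2
    exact Fin.val_injective (by simp only [Fin.val_mk]; omega)

lemma phi_theta (a : A n) : phi n (theta n a) = dHom a :=
  AlgHom.congr_fun (phi_theta_comp n) a

lemma psi_d (a : A n) : psi n (dHom a) = theta n a := by
  rw [psi_apply]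
  simp only [psiFun, dHom_apply, Fin.sum_univ_two, Matrix.diagonal_apply, one_ne_zero,
    zero_ne_one, ↓reduceIte, map_zero, zero_mul, add_zero, zero_add]
  rw [← mul_add, Eab_sum, mul_one]

lemma psiFun_ext (M : Matrix (Fin 2) (Fin 2) (A n)) :
    psiFun n M = theta n (M 0 0) * Eab (uu n) (vv n) 0 0 + theta n (M 0 1) * Eab (uu n) (vv n) 0 1
      + (theta n (M 1 0) * Eab (uu n) (vv n) 1 0 + theta n (M 1 1) * Eab (uu n) (vv n) 1 1) := by
  simp only [psiFun, Fin.sum_univ_two]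

lemma psi_sz : psi n (sz : Matrix (Fin 2) (Fin 2) (A n)) = uu n := by
  rw [psi_apply, psiFun_ext]
  rw [show (sz : Matrix (Fin 2) (Fin 2) (A n)) 0 0 = 1 from rfl,
    show (sz : Matrix (Fin 2) (Fin 2) (A n)) 0 1 = 0 from rfl,
    show (sz : Matrix (Fin 2) (Fin 2) (A n)) 1 0 = 0 from rfl,
    show (sz : Matrix (Fin 2) (Fin 2) (A n)) 1 1 = -1 from rfl]
  have h2 : theta n (-1 : A n) * Eab (uu n) (vv n) 1 1 = -(Eab (uu n) (vv n) 1 1) := by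
    rw [map_neg, map_one]
    exact neg_one_mul (Eab (uu n) (vv n) 1 1)
  rw [map_one, map_zero, h2, one_mul, zero_mul, zero_mul, zero_add, add_zero,
    ← sub_eq_add_neg]
  exact Eab_diff

lemma psi_sx : psi n (sx : Matrix (Fin 2) (Fin 2) (A n)) = vv n := by
  rw [psi_apply, psiFun_ext]
  rw [show (sx : Matrix (Fin 2) (Fin 2) (A n)) 0 0 = 0 from rfl,
    show (sx : Matrix (Fin 2) (Fin 2) (A n)) 0 1 = 1 from rfl,
    show (sx : Matrix (Fin 2) (Fin 2) (A n)) 1 0 = 1 from rfl,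
    show (sx : Matrix (Fin 2) (Fin 2) (A n)) 1 1 = 0 from rfl]
  rw [map_one, map_zero, one_mul, one_mul, zero_mul, zero_mul, zero_add, add_zero]
  exact Eab_off (u := uu n)

noncomputable def stepEquiv : A (n + 1) ≃ₐ[ℝ] Matrix (Fin 2) (Fin 2) (A n) := by
  refine AlgEquiv.ofAlgHom (phi n) (psi n) ?_ ?_
  · apply AlgHom.ext
    intro M
    show phi n (psi n M) = M
    rw [psi_apply]
    simp only [psiFun, map_sum, map_mul, phi_theta, map_Eab, phi_u, phi_v, Eab_mat,
      dHom_mul_std]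
    exact (Matrix.matrix_eq_sum_single M).symm
  · apply algHom_ext
    intro i
    show psi n (phi n (X (n + 1) i)) = X (n + 1) i
    rw [phi_X, phiF]
    by_cases h : (i : ℕ) < 2 * n
    · rw [dif_pos h, psi_d, theta_X, thF, dif_pos (by simp only [Fin.val_mk]; omega)]
    · rw [dif_neg h]
      by_cases h2 : (i : ℕ) = 2 * n
      · rw [if_pos h2, psi_sz, uu]
        congr 1
        exact Fin.val_injective (by simp only [Fin.val_mk]; omega)
      · rw [if_neg h2]
        by_cases h3 : (i : ℕ) = 2 * n + 1
        · rw [if_pos h3, psi_sx, vv]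
          congr 1
          exact Fin.val_injective (by simp only [Fin.val_mk]; omega)
        · rw [if_neg h3, psi_d, theta_X, thF, dif_neg (by simp only [Fin.val_mk]; omega)]
          congr 1
          exact Fin.val_injective (by simp only [Fin.val_mk]; omega)

end Step

theorem main (n : ℕ) :
    Nonempty (A n ≃ₐ[ℝ] Matrix (Fin (2 ^ n)) (Fin (2 ^ n)) ℂ) := by
  induction n with
  | zero => exact ⟨equiv0.trans (oneByOne ℝ ℂ)⟩
  | succ n ih =>
    obtain ⟨e⟩ := ih
    exact ⟨((stepEquiv n).trans (e.mapMatrix (m := Fin 2))).trans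
      ((Matrix.compAlgEquiv (Fin 2) (Fin (2 ^ n)) ℂ ℝ).trans
        (Matrix.reindexAlgEquiv ℝ ℂ (finProdFinEquiv.trans (finCongr (by ring)))))⟩


end T14proof

theorem twisted_mu2_odd_iso_matrix_complex (n : ℕ) :
    Nonempty (RingQuot (Rel14 n) ≃ₐ[ℝ] Matrix (Fin (2 ^ n)) (Fin (2 ^ n)) ℂ) := by
  exact T14proof.main n
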